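/- Let T be a connected graded S-ring and P an S-subbimodule, P_n := Σ_{i+j+k=n} T^{≤i} P^{≤j} T^{≤k}. The following are equivalent: (1) P is of PBW-type (i.e. LH(⟨P⟩) ⊆ ⟨LH(P)⟩); (2) P_{n+1} ∩ T^{≤n} ⊆ P_n for all n (Jacobi conditions); (3) P_m ∩ T^{≤n} ⊆ P_n for all n and all m > n; (4) ⟨P⟩ ∩ T^{≤n} = P_n for all n. -/

import Mathlib

variable {T : Type*} [Ring T]

/-- Projection onto the degree `n` homogeneous component. -/
noncomputable def projFun (𝒜 : ℕ → AddSubgroup T) [GradedRing 𝒜] (n : ℕ) (x : T) : T :=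
  (DirectSum.decompose 𝒜 x n : T)

lemma projFun_add (𝒜 : ℕ → AddSubgroup T) [GradedRing 𝒜] (n : ℕ) (x y : T) :
    projFun 𝒜 n (x + y) = projFun 𝒜 n x + projFun 𝒜 n y := by
  unfold projFun
  rw [DirectSum.decompose_add, DirectSum.add_apply, AddSubgroup.coe_add]

lemma projFun_neg (𝒜 : ℕ → AddSubgroup T) [GradedRing 𝒜] (n : ℕ) (x : T) :
    projFun 𝒜 n (-x) = - projFun 𝒜 n x := by
  unfold projFun
  rw [DirectSum.decompose_neg, DFinsupp.neg_apply, AddSubgroup.coe_neg]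

/-- The `S`-subbimodule `T^{≤ n}` of elements of degree at most `n`. -/
noncomputable def degLE (𝒜 : ℕ → AddSubgroup T) [GradedRing 𝒜] (n : ℕ) : AddSubgroup T where
  carrier := {x | ∀ m, n < m → projFun 𝒜 m x = 0}
  zero_mem' := by
    intro m hm
    unfold projFun
    rw [DirectSum.decompose_zero, DirectSum.zero_apply, AddSubgroup.coe_zero]
  add_mem' := by
    intro a b ha hb m hm
    rw [projFun_add, ha m hm, hb m hm, add_zero]
  neg_mem' := by
    intro a ha m hm
    rw [projFun_neg, ha m hm, neg_zero]

/-- `y` is the leading homogeneous part of `x`. -/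
def IsLH (𝒜 : ℕ → AddSubgroup T) [GradedRing 𝒜] (x y : T) : Prop :=
  (x = 0 ∧ y = 0) ∨
    ∃ m, y = projFun 𝒜 m x ∧ y ≠ 0 ∧ ∀ k, m < k → projFun 𝒜 k x = 0

/-- `LH(X)`, the set of leading homogeneous parts of elements of `X`. -/
def leadSet (𝒜 : ℕ → AddSubgroup T) [GradedRing 𝒜] (X : Set T) : Set T :=
  {y | ∃ x ∈ X, IsLH 𝒜 x y}

/-- An additive subgroup of `T` which is an `S = T^0`-subbimodule. -/
def IsSubbimodule (𝒜 : ℕ → AddSubgroup T) (X : AddSubgroup T) : Prop :=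
  ∀ s ∈ 𝒜 0, ∀ x ∈ X, s * x ∈ X ∧ x * s ∈ X

/-- `T` is strongly graded: `T^{n+1} = T^1 T^n`. -/
def StronglyGraded (𝒜 : ℕ → AddSubgroup T) : Prop :=
  ∀ n, (𝒜 (n + 1) : Set T) ⊆
    ↑(AddSubgroup.closure {y : T | ∃ a ∈ 𝒜 1, ∃ b ∈ 𝒜 n, y = a * b})

/-- The canonical filtration `P_n = Σ_{i+j+k=n} T^{≤i} P^{≤j} T^{≤k}` of the ideal `⟨P⟩`. -/
noncomputable def Pcan (𝒜 : ℕ → AddSubgroup T) [GradedRing 𝒜] (P : AddSubgroup T) (n : ℕ) :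
    AddSubgroup T :=
  AddSubgroup.closure {x : T | ∃ i j k : ℕ, i + j + k = n ∧
    ∃ a ∈ degLE 𝒜 i, ∃ b ∈ P ⊓ degLE 𝒜 j, ∃ c ∈ degLE 𝒜 k, x = a * b * c}
section Aux

variable (𝒜 : ℕ → AddSubgroup T) [GradedRing 𝒜]

/-- `projFun` as an additive monoid hom. -/
noncomputable def projHom (n : ℕ) : T →+ T where
  toFun := projFun 𝒜 n
  map_zero' := by
    unfold projFun
    rw [DirectSum.decompose_zero, DirectSum.zero_apply, AddSubgroup.coe_zero]
  map_add' := projFun_add 𝒜 n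

@[simp] lemma projHom_apply (n : ℕ) (x : T) : projHom 𝒜 n x = projFun 𝒜 n x := rfl

lemma projFun_mem (n : ℕ) (x : T) : projFun 𝒜 n x ∈ 𝒜 n := SetLike.coe_mem _

lemma projFun_of_mem_same {d : ℕ} {z : T} (hz : z ∈ 𝒜 d) : projFun 𝒜 d z = z :=
  DirectSum.decompose_of_mem_same 𝒜 hz

lemma projFun_of_mem_ne {d e : ℕ} {z : T} (hz : z ∈ 𝒜 d) (h : d ≠ e) :
    projFun 𝒜 e z = 0 :=
  DirectSum.decompose_of_mem_ne 𝒜 hz h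

lemma grade_le_degLE (d : ℕ) : 𝒜 d ≤ degLE 𝒜 d := by
  intro z hz m hm
  exact projFun_of_mem_ne 𝒜 hz (by omega)

lemma degLE_mono {n m : ℕ} (h : n ≤ m) : degLE 𝒜 n ≤ degLE 𝒜 m := by
  intro x hx e he
  exact hx e (by omega)

lemma one_mem_degLE : (1 : T) ∈ degLE 𝒜 0 :=
  grade_le_degLE 𝒜 0 SetLike.GradedOne.one_mem

open scoped Classical in
lemma sum_support_proj (x : T) :
    ∑ i ∈ (DirectSum.decompose 𝒜 x).support, projFun 𝒜 i x = x := by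
  classical
  exact DirectSum.sum_support_decompose 𝒜 x

open scoped Classical in
lemma exists_mem_degLE (x : T) : ∃ n, x ∈ degLE 𝒜 n := by
  classical
  refine ⟨(DirectSum.decompose 𝒜 x).support.sup id, fun m hm => ?_⟩
  have : m ∉ (DirectSum.decompose 𝒜 x).support := by
    intro hmem
    exact absurd (show m ≤ _ from Finset.le_sup (f := id) hmem) (by omega)
  rw [DFinsupp.notMem_support_iff] at this
  unfold projFun
  rw [this, AddSubgroup.coe_zero]

lemma eq_zero_of_forall_proj {x : T} (h : ∀ e, projFun 𝒜 e x = 0) : x = 0 := by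
  classical
  rw [← sum_support_proj 𝒜 x]
  exact Finset.sum_eq_zero fun i _ => h i

open scoped Classical in
lemma not_mem_support_of_proj_eq_zero {x : T} {e : ℕ} (h : projFun 𝒜 e x = 0) :
    e ∉ (DirectSum.decompose 𝒜 x).support := by
  rw [DFinsupp.notMem_support_iff]
  exact Subtype.ext h

end Aux
section Mul

variable (𝒜 : ℕ → AddSubgroup T) [GradedRing 𝒜]

open scoped Classical in
lemma le_of_mem_support_of_degLE {i : ℕ} {x : T} (hx : x ∈ degLE 𝒜 i) {p : ℕ}
    (hp : p ∈ (DirectSum.decompose 𝒜 x).support) : p ≤ i := by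
  by_contra hpi
  exact (not_mem_support_of_proj_eq_zero 𝒜 (hx p (by omega))) hp

open scoped Classical in
lemma proj_eq_zero_of_not_mem_support {x : T} {e : ℕ}
    (h : e ∉ (DirectSum.decompose 𝒜 x).support) : projFun 𝒜 e x = 0 := by
  rw [DFinsupp.notMem_support_iff] at h
  unfold projFun
  rw [h, AddSubgroup.coe_zero]

open scoped Classical in
lemma projFun_mul_aux (x y : T) (m : ℕ) :
    projFun 𝒜 m (x * y) =
      ∑ ij ∈ ((DirectSum.decompose 𝒜 x).support ×ˢ
          (DirectSum.decompose 𝒜 y).support).filter (fun ij : ℕ × ℕ => ij.1 + ij.2 = m),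
        projFun 𝒜 ij.1 x * projFun 𝒜 ij.2 y := by
  unfold projFun
  rw [DirectSum.decompose_mul, DirectSum.coe_mul_apply]

lemma degLE_mul {i j : ℕ} {x y : T} (hx : x ∈ degLE 𝒜 i) (hy : y ∈ degLE 𝒜 j) :
    x * y ∈ degLE 𝒜 (i + j) := by
  classical
  intro m hm
  rw [projFun_mul_aux]
  refine Finset.sum_eq_zero fun pq hpq => ?_
  rw [Finset.mem_filter, Finset.mem_product] at hpq
  have h1 := le_of_mem_support_of_degLE 𝒜 hx hpq.1.1
  have h2 := le_of_mem_support_of_degLE 𝒜 hy hpq.1.2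
  omega

lemma projFun_mul_top {i j : ℕ} {x y : T} (hx : x ∈ degLE 𝒜 i) (hy : y ∈ degLE 𝒜 j) :
    projFun 𝒜 (i + j) (x * y) = projFun 𝒜 i x * projFun 𝒜 j y := by
  classical
  rw [projFun_mul_aux]
  have hsub : (((DirectSum.decompose 𝒜 x).support ×ˢ (DirectSum.decompose 𝒜 y).support).filter
      (fun ij : ℕ × ℕ => ij.1 + ij.2 = i + j)) ⊆ {(i, j)} := by
    intro pq hpq
    rw [Finset.mem_filter, Finset.mem_product] at hpq
    have h1 := le_of_mem_support_of_degLE 𝒜 hx hpq.1.1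
    have h2 := le_of_mem_support_of_degLE 𝒜 hy hpq.1.2
    have hpq2 : pq = (i, j) := by
      obtain ⟨p, q⟩ := pq
      simp only [Prod.mk.injEq]
      constructor <;> omega
    rw [hpq2]
    exact Finset.mem_singleton_self _
  rw [Finset.sum_subset hsub ?_, Finset.sum_singleton]
  intro pq hpq hnot
  rw [Finset.mem_singleton] at hpq
  subst hpq
  rw [Finset.mem_filter, Finset.mem_product] at hnot
  by_cases hi : i ∈ (DirectSum.decompose 𝒜 x).support
  · have hj : j ∉ (DirectSum.decompose 𝒜 y).support := fun hj => hnot ⟨⟨hi, hj⟩, rfl⟩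
    rw [proj_eq_zero_of_not_mem_support 𝒜 hj, mul_zero]
  · rw [proj_eq_zero_of_not_mem_support 𝒜 hi, zero_mul]

end Mul
section PcanBasic

variable (𝒜 : ℕ → AddSubgroup T) [GradedRing 𝒜] (P : AddSubgroup T)

lemma mem_Pcan_of_triple {i j k : ℕ} {a b c : T} (ha : a ∈ degLE 𝒜 i)
    (hb : b ∈ P ⊓ degLE 𝒜 j) (hc : c ∈ degLE 𝒜 k) :
    a * b * c ∈ Pcan 𝒜 P (i + j + k) :=
  AddSubgroup.subset_closure ⟨i, j, k, rfl, a, ha, b, hb, c, hc, rfl⟩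

lemma Pcan_le_degLE (n : ℕ) : Pcan 𝒜 P n ≤ degLE 𝒜 n := by
  rw [Pcan, AddSubgroup.closure_le]
  rintro x ⟨i, j, k, hijk, a, ha, b, hb, c, hc, rfl⟩
  have hb2 : b ∈ degLE 𝒜 j := (AddSubgroup.mem_inf.mp hb).2
  have := degLE_mul 𝒜 (degLE_mul 𝒜 ha hb2) hc
  rwa [hijk] at this

lemma Pcan_mono {n m : ℕ} (h : n ≤ m) : Pcan 𝒜 P n ≤ Pcan 𝒜 P m := by
  rw [Pcan, AddSubgroup.closure_le]
  rintro x ⟨i, j, k, hijk, a, ha, b, hb, c, hc, rfl⟩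
  have h' := mem_Pcan_of_triple 𝒜 P
    (degLE_mono 𝒜 (show i ≤ i + (m - n) by omega) ha) hb hc
  rwa [show i + (m - n) + j + k = m by omega] at h'

lemma Pcan_le_span {n : ℕ} {x : T} (hx : x ∈ Pcan 𝒜 P n) :
    x ∈ TwoSidedIdeal.span (P : Set T) := by
  induction hx using AddSubgroup.closure_induction with
  | mem y hy =>
    obtain ⟨i, j, k, hijk, a, ha, b, hb, c, hc, rfl⟩ := hy
    have hb1 : b ∈ (TwoSidedIdeal.span (P : Set T) : Set T) :=
      TwoSidedIdeal.subset_span (AddSubgroup.mem_inf.mp hb).1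
    exact TwoSidedIdeal.mul_mem_right _ _ _
      (TwoSidedIdeal.mul_mem_left _ _ _ (SetLike.mem_coe.mp hb1))
  | zero => exact zero_mem _
  | add x y hx hy px py => exact add_mem px py
  | neg x hx px => exact neg_mem px

lemma degLE_mul_Pcan {p n : ℕ} {r x : T} (hr : r ∈ degLE 𝒜 p) (hx : x ∈ Pcan 𝒜 P n) :
    r * x ∈ Pcan 𝒜 P (p + n) := by
  induction hx using AddSubgroup.closure_induction with
  | mem y hy =>
    obtain ⟨i, j, k, hijk, a, ha, b, hb, c, hc, rfl⟩ := hy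
    have h' := mem_Pcan_of_triple 𝒜 P (degLE_mul 𝒜 hr ha) hb hc
    rw [show p + i + j + k = p + n by omega] at h'
    rwa [show r * (a * b * c) = r * a * b * c by noncomm_ring]
  | zero => rw [mul_zero]; exact zero_mem _
  | add x y hx hy px py => rw [mul_add]; exact add_mem px py
  | neg x hx px => rw [mul_neg]; exact neg_mem px

lemma Pcan_mul_degLE {n k : ℕ} {x r : T} (hx : x ∈ Pcan 𝒜 P n) (hr : r ∈ degLE 𝒜 k) :
    x * r ∈ Pcan 𝒜 P (n + k) := by
  induction hx using AddSubgroup.closure_induction with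
  | mem y hy =>
    obtain ⟨i, j, k', hijk, a, ha, b, hb, c, hc, rfl⟩ := hy
    have h' := mem_Pcan_of_triple 𝒜 P ha hb (degLE_mul 𝒜 hc hr)
    rw [show i + j + (k' + k) = n + k by omega] at h'
    rwa [show a * b * c * r = a * b * (c * r) by noncomm_ring]
  | zero => rw [zero_mul]; exact zero_mem _
  | add x y hx hy px py => rw [add_mul]; exact add_mem px py
  | neg x hx px => rw [neg_mul]; exact neg_mem px

lemma mem_Pcan_of_mem_P {x : T} (hx : x ∈ P) : ∃ n, x ∈ Pcan 𝒜 P n := by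
  obtain ⟨j, hj⟩ := exists_mem_degLE 𝒜 x
  refine ⟨j, ?_⟩
  have h' := mem_Pcan_of_triple 𝒜 P (one_mem_degLE 𝒜)
    (AddSubgroup.mem_inf.mpr ⟨hx, hj⟩) (one_mem_degLE 𝒜)
  simpa using h'

lemma exists_Pcan_of_mem_span {x : T} (hx : x ∈ TwoSidedIdeal.span (P : Set T)) :
    ∃ n, x ∈ Pcan 𝒜 P n := by
  let J : TwoSidedIdeal T := TwoSidedIdeal.mk' {x | ∃ n, x ∈ Pcan 𝒜 P n}
    ⟨0, zero_mem _⟩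
    (fun {a b} ha hb => by
      obtain ⟨n, hn⟩ := ha
      obtain ⟨m, hm⟩ := hb
      exact ⟨max n m, add_mem (Pcan_mono 𝒜 P (le_max_left n m) hn)
        (Pcan_mono 𝒜 P (le_max_right n m) hm)⟩)
    (fun {a} ha => by
      obtain ⟨n, hn⟩ := ha
      exact ⟨n, neg_mem hn⟩)
    (fun {a b} hb => by
      obtain ⟨n, hn⟩ := hb
      obtain ⟨p, hp⟩ := exists_mem_degLE 𝒜 a
      exact ⟨p + n, degLE_mul_Pcan 𝒜 P hp hn⟩)
    (fun {a b} ha => by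
      obtain ⟨n, hn⟩ := ha
      obtain ⟨p, hp⟩ := exists_mem_degLE 𝒜 b
      exact ⟨n + p, Pcan_mul_degLE 𝒜 P hn hp⟩)
  have hPJ : (P : Set T) ⊆ J := by
    intro y hy
    rw [SetLike.mem_coe, TwoSidedIdeal.mem_mk']
    exact mem_Pcan_of_mem_P 𝒜 P hy
  have := TwoSidedIdeal.mem_span_iff.mp hx J hPJ
  rwa [TwoSidedIdeal.mem_mk'] at this

end PcanBasic
section Lead

variable (𝒜 : ℕ → AddSubgroup T) [GradedRing 𝒜] (P : AddSubgroup T)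

open scoped Classical in
lemma exists_leadDeg {x : T} (hx : x ≠ 0) :
    ∃ l, projFun 𝒜 l x ≠ 0 ∧ ∀ e, l < e → projFun 𝒜 e x = 0 := by
  have hne : (DirectSum.decompose 𝒜 x).support.Nonempty := by
    by_contra h
    rw [Finset.not_nonempty_iff_eq_empty] at h
    refine hx (eq_zero_of_forall_proj 𝒜 fun e => ?_)
    apply proj_eq_zero_of_not_mem_support
    simp [h]
  refine ⟨(DirectSum.decompose 𝒜 x).support.max' hne, fun h0 => ?_, fun e he => ?_⟩
  · exact (not_mem_support_of_proj_eq_zero 𝒜 h0) (Finset.max'_mem _ hne)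
  · apply proj_eq_zero_of_not_mem_support
    intro hmem
    exact absurd (Finset.le_max' _ e hmem) (by omega)

/-- Lemma A: a homogeneous element of degree `m` of the ideal generated by `LH(P)`
is the top-degree part of an element of `Pcan m`. -/
lemma exists_Pcan_proj_eq {m : ℕ} {v : T} (hv : v ∈ 𝒜 m)
    (hvmem : v ∈ TwoSidedIdeal.span (leadSet 𝒜 (P : Set T))) :
    ∃ w ∈ Pcan 𝒜 P m, projFun 𝒜 m w = v := by
  classical
  set W : AddSubgroup T := (Pcan 𝒜 P m).map (projHom 𝒜 m) with hW
  suffices h : projFun 𝒜 m v ∈ W by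
    rw [projFun_of_mem_same 𝒜 hv, hW, AddSubgroup.mem_map] at h
    obtain ⟨w, hw, hww⟩ := h
    exact ⟨w, hw, hww⟩
  have hv2 := TwoSidedIdeal.mem_span_iff_mem_addSubgroup_closure.mp hvmem
  clear hv hvmem
  induction hv2 using AddSubgroup.closure_induction with
  | zero =>
    have : projFun 𝒜 m (0 : T) = 0 := (projHom 𝒜 m).map_zero
    rw [this]; exact zero_mem W
  | add x y hx hy px py => rw [projFun_add]; exact add_mem px py
  | neg x hx px => rw [projFun_neg]; exact neg_mem px
  | mem y hy =>
    obtain ⟨ag, hag, c, -, rfl⟩ := hy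
    obtain ⟨a, -, g, hg, rfl⟩ := hag
    obtain ⟨b, hbP, hLH⟩ := hg
    rcases hLH with ⟨hb0, hg0⟩ | ⟨j, hgj, hgne, hbtop⟩
    · simp only [hg0, mul_zero, zero_mul]
      have : projFun 𝒜 m (0 : T) = 0 := (projHom 𝒜 m).map_zero
      rw [this]; exact zero_mem W
    · have hgA : g ∈ 𝒜 j := by rw [hgj]; exact projFun_mem 𝒜 j b
      have hbD : b ∈ degLE 𝒜 j := fun e he => hbtop e he
      have expand : a * g * c = ∑ i ∈ (DirectSum.decompose 𝒜 a).support,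
          ∑ k ∈ (DirectSum.decompose 𝒜 c).support,
            projFun 𝒜 i a * g * projFun 𝒜 k c := by
        conv_lhs => rw [← sum_support_proj 𝒜 a, ← sum_support_proj 𝒜 c]
        rw [Finset.sum_mul, Finset.sum_mul]
        simp_rw [Finset.mul_sum]
      show projHom 𝒜 m (a * g * c) ∈ W
      rw [expand, map_sum]
      refine AddSubgroup.sum_mem W fun i _ => ?_
      rw [map_sum]
      refine AddSubgroup.sum_mem W fun k _ => ?_
      have hai : projFun 𝒜 i a ∈ 𝒜 i := projFun_mem 𝒜 i a
      have hck : projFun 𝒜 k c ∈ 𝒜 k := projFun_mem 𝒜 k c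
      have hmemA : projFun 𝒜 i a * g * projFun 𝒜 k c ∈ 𝒜 (i + j + k) :=
        SetLike.mul_mem_graded (SetLike.mul_mem_graded hai hgA) hck
      show projFun 𝒜 m (projFun 𝒜 i a * g * projFun 𝒜 k c) ∈ W
      by_cases hd : i + j + k = m
      · rw [hd] at hmemA
        have e1 : projFun 𝒜 m (projFun 𝒜 i a * g * projFun 𝒜 k c)
            = projFun 𝒜 i a * g * projFun 𝒜 k c := projFun_of_mem_same 𝒜 hmemA
        have e2 : projFun 𝒜 m (projFun 𝒜 i a * b * projFun 𝒜 k c)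
            = projFun 𝒜 i a * g * projFun 𝒜 k c := by
          have h1 : projFun 𝒜 i a * b ∈ degLE 𝒜 (i + j) :=
            degLE_mul 𝒜 (grade_le_degLE 𝒜 i hai) hbD
          have h3 := projFun_mul_top 𝒜 h1 (grade_le_degLE 𝒜 k hck)
          have h2 := projFun_mul_top 𝒜 (grade_le_degLE 𝒜 i hai) hbD
          rw [h2, projFun_of_mem_same 𝒜 hai, projFun_of_mem_same 𝒜 hck, ← hgj] at h3
          rw [← hd]
          exact h3
        rw [hW, AddSubgroup.mem_map]
        refine ⟨projFun 𝒜 i a * b * projFun 𝒜 k c, ?_, ?_⟩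
        · rw [← hd]
          exact mem_Pcan_of_triple 𝒜 P (grade_le_degLE 𝒜 i hai)
            (AddSubgroup.mem_inf.mpr ⟨hbP, hbD⟩) (grade_le_degLE 𝒜 k hck)
        · rw [projHom_apply, e2, e1]
      · rw [projFun_of_mem_ne 𝒜 hmemA hd]
        exact zero_mem W

end Lead
section Implications

variable (𝒜 : ℕ → AddSubgroup T) [GradedRing 𝒜] (P : AddSubgroup T)

lemma projFun_sub (n : ℕ) (x y : T) :
    projFun 𝒜 n (x - y) = projFun 𝒜 n x - projFun 𝒜 n y :=
  (projHom 𝒜 n).map_sub x y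

/-- (1) → (4), hard inclusion, by strong induction on the degree. -/
lemma span_inter_degLE_subset_Pcan
    (h1 : leadSet 𝒜 (TwoSidedIdeal.span (P : Set T) : Set T)
      ⊆ (TwoSidedIdeal.span (leadSet 𝒜 (P : Set T)) : Set T)) :
    ∀ m, ∀ x, x ∈ TwoSidedIdeal.span (P : Set T) → x ∈ degLE 𝒜 m → x ∈ Pcan 𝒜 P m := by
  intro m
  induction m using Nat.strong_induction_on with
  | _ m IH =>
    intro x hxI hxD
    by_cases hx0 : x = 0
    · rw [hx0]; exact zero_mem _
    obtain ⟨l, hl0, hltop⟩ := exists_leadDeg 𝒜 hx0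
    have hlm : l ≤ m := by
      by_contra h
      exact hl0 (hxD l (by omega))
    rcases lt_or_eq_of_le hlm with hlt | heq
    · have hxl : x ∈ degLE 𝒜 l := fun e he => hltop e he
      exact Pcan_mono 𝒜 P (le_of_lt hlt) (IH l hlt x hxI hxl)
    · subst heq
      have hvlead : projFun 𝒜 l x ∈ leadSet 𝒜 (TwoSidedIdeal.span (P : Set T) : Set T) :=
        ⟨x, SetLike.mem_coe.mpr hxI, Or.inr ⟨l, rfl, hl0, hltop⟩⟩
      have hv2 : projFun 𝒜 l x ∈ TwoSidedIdeal.span (leadSet 𝒜 (P : Set T)) :=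
        SetLike.mem_coe.mp (h1 hvlead)
      obtain ⟨w, hwP, hwproj⟩ := exists_Pcan_proj_eq 𝒜 P (projFun_mem 𝒜 l x) hv2
      have hwD : w ∈ degLE 𝒜 l := Pcan_le_degLE 𝒜 P l hwP
      have hxw : ∀ e, l ≤ e → projFun 𝒜 e (x - w) = 0 := by
        intro e he
        rw [projFun_sub]
        rcases eq_or_lt_of_le he with heq2 | hlt2
        · rw [← heq2, hwproj, sub_self]
        · rw [hltop e hlt2, hwD e hlt2, sub_self]
      rcases Nat.eq_zero_or_pos l with hl | hl
      · have : x - w = 0 := eq_zero_of_forall_proj 𝒜 fun e => hxw e (by omega)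
        have hxeq : x = w := by
          rw [sub_eq_zero] at this; exact this
        rw [hxeq]; exact hwP
      · have hxwD : x - w ∈ degLE 𝒜 (l - 1) := fun e he => hxw e (by omega)
        have hxwI : x - w ∈ TwoSidedIdeal.span (P : Set T) :=
          sub_mem hxI (Pcan_le_span 𝒜 P hwP)
        have hxwP : x - w ∈ Pcan 𝒜 P (l - 1) := IH (l - 1) (by omega) _ hxwI hxwD
        have : x = (x - w) + w := by abel
        rw [this]
        exact add_mem (Pcan_mono 𝒜 P (by omega) hxwP) hwP

/-- Used in (4) → (1): top part of `Pcan m` lies in the ideal of leading parts. -/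
lemma proj_Pcan_mem_span {m : ℕ} {z : T} (hz : z ∈ Pcan 𝒜 P m) :
    projFun 𝒜 m z ∈ TwoSidedIdeal.span (leadSet 𝒜 (P : Set T)) := by
  induction hz using AddSubgroup.closure_induction with
  | zero =>
    have : projFun 𝒜 m (0 : T) = 0 := (projHom 𝒜 m).map_zero
    rw [this]; exact zero_mem _
  | add x y hx hy px py => rw [projFun_add]; exact add_mem px py
  | neg x hx px => rw [projFun_neg]; exact neg_mem px
  | mem y hy =>
    obtain ⟨i, j, k, hijk, a, ha, b, hb, c, hc, rfl⟩ := hy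
    obtain ⟨hbP, hbD⟩ := AddSubgroup.mem_inf.mp hb
    have e : projFun 𝒜 m (a * b * c) = projFun 𝒜 i a * projFun 𝒜 j b * projFun 𝒜 k c := by
      rw [← hijk, projFun_mul_top 𝒜 (degLE_mul 𝒜 ha hbD) hc, projFun_mul_top 𝒜 ha hbD]
    rw [e]
    by_cases hb0 : projFun 𝒜 j b = 0
    · rw [hb0, mul_zero, zero_mul]; exact zero_mem _
    · have hlead : projFun 𝒜 j b ∈ leadSet 𝒜 (P : Set T) :=
        ⟨b, hbP, Or.inr ⟨j, rfl, hb0, fun e he => hbD e he⟩⟩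
      exact TwoSidedIdeal.mul_mem_right _ _ _
        (TwoSidedIdeal.mul_mem_left _ _ _
          (SetLike.mem_coe.mp (TwoSidedIdeal.subset_span hlead)))

end Implications
/-- Theorem 2.8. -/
theorem stmt_14 (𝒜 : ℕ → AddSubgroup T) [GradedRing 𝒜]
    (P : AddSubgroup T) (hP : IsSubbimodule 𝒜 P) :
    [ leadSet 𝒜 (TwoSidedIdeal.span (P : Set T) : Set T)
        ⊆ (TwoSidedIdeal.span (leadSet 𝒜 (P : Set T)) : Set T),
      ∀ n, (Pcan 𝒜 P (n + 1) : Set T) ∩ (degLE 𝒜 n : Set T) ⊆ (Pcan 𝒜 P n : Set T),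
      ∀ n m, n < m → (Pcan 𝒜 P m : Set T) ∩ (degLE 𝒜 n : Set T) ⊆ (Pcan 𝒜 P n : Set T),
      ∀ n, (TwoSidedIdeal.span (P : Set T) : Set T) ∩ (degLE 𝒜 n : Set T)
        = (Pcan 𝒜 P n : Set T) ].TFAE := by
  tfae_have 1 → 4 := by
    intro h1 n
    apply Set.Subset.antisymm
    · rintro x ⟨hxI, hxD⟩
      exact span_inter_degLE_subset_Pcan 𝒜 P h1 n x hxI hxD
    · intro x hx
      exact ⟨Pcan_le_span 𝒜 P hx, Pcan_le_degLE 𝒜 P n hx⟩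
  tfae_have 4 → 3 := by
    intro h4 n m hnm x hx
    have hx2 : x ∈ (TwoSidedIdeal.span (P : Set T) : Set T) ∩ (degLE 𝒜 n : Set T) :=
      ⟨Pcan_le_span 𝒜 P hx.1, hx.2⟩
    rw [h4 n] at hx2
    exact hx2
  tfae_have 3 → 2 := fun h3 n => h3 n (n + 1) (by omega)
  tfae_have 2 → 3 := by
    intro h2 n m
    induction m with
    | zero => intro h; exact absurd h (by omega)
    | succ m IH =>
      intro hnm x hx
      rcases eq_or_lt_of_le (Nat.lt_succ_iff.mp hnm) with heq | hlt
      · subst heq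
        exact h2 n hx
      · refine IH hlt ⟨?_, hx.2⟩
        exact h2 m ⟨hx.1, degLE_mono 𝒜 (le_of_lt hlt) hx.2⟩
  tfae_have 3 → 4 := by
    intro h3 n
    apply Set.Subset.antisymm
    · rintro x ⟨hxI, hxD⟩
      obtain ⟨m, hm⟩ := exists_Pcan_of_mem_span 𝒜 P hxI
      by_cases hmn : m ≤ n
      · exact Pcan_mono 𝒜 P hmn hm
      · exact h3 n m (by omega) ⟨hm, hxD⟩
    · intro x hx
      exact ⟨Pcan_le_span 𝒜 P hx, Pcan_le_degLE 𝒜 P n hx⟩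
  tfae_have 4 → 1 := by
    intro h4 y hy
    obtain ⟨x, hxI, hLH⟩ := hy
    rcases hLH with ⟨hx0, hy0⟩ | ⟨m, rfl, hyne, htop⟩
    · rw [hy0]
      exact zero_mem (TwoSidedIdeal.span (leadSet 𝒜 (P : Set T)))
    · have hxD : x ∈ degLE 𝒜 m := fun e he => htop e he
      have hxP : x ∈ Pcan 𝒜 P m := by
        have hx2 : x ∈ (TwoSidedIdeal.span (P : Set T) : Set T) ∩ (degLE 𝒜 m : Set T) :=
          ⟨hxI, hxD⟩
        rw [h4 m] at hx2
        exact hx2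
      exact proj_Pcan_mem_span 𝒜 P hxP
  tfae_finish
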